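/- arXiv:0808.3438 — 4 statements merged into one kernel-verified Lean document; each statement's English description precedes it below -/
import Mathlib

section
/- The function g defined by g(η) = (1/η²)(1/cosh²η − tanh(η)/η) for η > 0 satisfies g(η) < 0 for all η ≥ 0 (with g(0) = −2/3). -/
open Real

noncomputable def gBCS : ℝ → ℝ := fun η =>
  if η = 0 then -2/3 else (1/η^2) * (1/(Real.cosh η)^2 - Real.tanh η / η)

/-- `g η < 0` for all `η ≥ 0`. -/
theorem gBCS_neg : ∀ η : ℝ, 0 ≤ η → gBCS η < 0 := by
  intro η hη
  unfold gBCS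
  rcases eq_or_lt_of_le hη with h | h
  · simp [← h]
    norm_num
  · rw [if_neg (ne_of_gt h)]
    apply mul_neg_of_pos_of_neg
    · positivity
    · rw [sub_neg]
      have hc : (0:ℝ) < Real.cosh η := Real.cosh_pos η
      have hs : η < Real.sinh η := (Real.self_lt_sinh_iff).2 h
      have hkey : η < Real.sinh η * Real.cosh η := by
        calc η < Real.sinh η := hs
        _ = Real.sinh η * 1 := by ring
        _ ≤ Real.sinh η * Real.cosh η := by
            apply mul_le_mul_of_nonneg_left (Real.one_le_cosh η)
            linarith
      rw [Real.tanh_eq_sinh_div_cosh, div_div, div_lt_div_iff₀ (by positivity) (by positivity)]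
      nlinarith [sq_nonneg (Real.cosh η)]
end

section
/- The function G defined by G(η) = (1/η²)(3g(η) + 2 tanh(η)/(η cosh²η)) for η > 0, where g(η) = (1/η²)(1/cosh²η − tanh(η)/η), extends continuously to 0 with G(0) = −16/15. -/
open Real Filter

noncomputable def GBCS : ℝ → ℝ := fun η =>
  (1/η^2) * (3 * gBCS η + 2 * Real.tanh η / (η * (Real.cosh η)^2))

lemma fixup {f : ℝ → ℝ} {d d' x : ℝ} (h : HasDerivAt f d x) (he : d = d') :
    HasDerivAt f d' x := he ▸ h

noncomputable def Sf (a b c : ℝ) : ℝ → ℝ := fun x =>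
  a * Real.sinh x + b * x * Real.cosh x + 2 * x^2 * Real.sinh x - c * Real.sinh (3*x)

noncomputable def Cf (a b c : ℝ) : ℝ → ℝ := fun x =>
  a * Real.cosh x + b * x * Real.sinh x + 2 * x^2 * Real.cosh x - c * Real.cosh (3*x)

lemma Sf_hasDerivAt (a b c x : ℝ) : HasDerivAt (Sf a b c) (Cf (a+b) (b+4) (3*c) x) x := by
  have h1 : HasDerivAt (fun y : ℝ => Real.sinh (3*y)) (Real.cosh (3*x) * 3) x := by
    simpa [Function.comp_def] using
      (Real.hasDerivAt_sinh (3*x)).comp x ((hasDerivAt_id x).const_mul 3)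
  have h := ((((Real.hasDerivAt_sinh x).const_mul a).add
      (((hasDerivAt_id x).const_mul b).mul (Real.hasDerivAt_cosh x))).add
      (((hasDerivAt_pow 2 x).const_mul 2).mul (Real.hasDerivAt_sinh x))).sub
      (h1.const_mul c)
  exact fixup (h.congr_of_eventuallyEq (Eventually.of_forall fun y => by
    simp only [Sf, id_eq, Pi.add_apply, Pi.mul_apply, Pi.sub_apply]; try ring)) (by simp only [Cf, id_eq]; push_cast; ring)

lemma Cf_hasDerivAt (a b c x : ℝ) : HasDerivAt (Cf a b c) (Sf (a+b) (b+4) (3*c) x) x := by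
  have h1 : HasDerivAt (fun y : ℝ => Real.cosh (3*y)) (Real.sinh (3*x) * 3) x := by
    simpa [Function.comp_def] using
      (Real.hasDerivAt_cosh (3*x)).comp x ((hasDerivAt_id x).const_mul 3)
  have h := ((((Real.hasDerivAt_cosh x).const_mul a).add
      (((hasDerivAt_id x).const_mul b).mul (Real.hasDerivAt_sinh x))).add
      (((hasDerivAt_pow 2 x).const_mul 2).mul (Real.hasDerivAt_cosh x))).sub
      (h1.const_mul c)
  exact fixup (h.congr_of_eventuallyEq (Eventually.of_forall fun y => by
    simp only [Cf, id_eq, Pi.add_apply, Pi.mul_apply, Pi.sub_apply]; try ring)) (by simp only [Sf, id_eq]; push_cast; ring)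

lemma Sf_cont (a b c : ℝ) : Continuous (Sf a b c) := by unfold Sf; fun_prop

lemma Cf_cont (a b c : ℝ) : Continuous (Cf a b c) := by unfold Cf; fun_prop

lemma Sf_zero (a b c : ℝ) : Sf a b c 0 = 0 := by simp [Sf]

lemma Cf_zero (a b c : ℝ) : Cf a b c 0 = a - c := by simp [Cf]

lemma Sf_tendsto (a b c : ℝ) : Tendsto (Sf a b c) (nhdsWithin 0 (Set.Ioi 0)) (nhds 0) := by
  have := ((Sf_cont a b c).tendsto 0).mono_left (nhdsWithin_le_nhds (s := Set.Ioi 0))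
  simpa [Sf_zero] using this

lemma Cf_tendsto (a b : ℝ) : Tendsto (Cf a b a) (nhdsWithin 0 (Set.Ioi 0)) (nhds 0) := by
  have := ((Cf_cont a b a).tendsto 0).mono_left (nhdsWithin_le_nhds (s := Set.Ioi 0))
  simpa [Cf_zero] using this

lemma step (f f' : ℝ → ℝ) (n : ℕ) (c c' l : ℝ) (hc : c ≠ 0) (hcc : c' = c * ((n : ℝ) + 1))
    (hf : ∀ x, HasDerivAt f (f' x) x)
    (hf0 : Tendsto f (nhdsWithin 0 (Set.Ioi 0)) (nhds 0))
    (hdiv : Tendsto (fun x => f' x / (c' * x^n)) (nhdsWithin 0 (Set.Ioi 0)) (nhds l)) :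
    Tendsto (fun x => f x / (c * x^(n+1))) (nhdsWithin 0 (Set.Ioi 0)) (nhds l) := by
  have hn : ((n : ℝ) + 1) ≠ 0 := by positivity
  have hc' : c' ≠ 0 := by rw [hcc]; exact mul_ne_zero hc hn
  apply HasDerivAt.lhopital_zero_nhdsGT (f' := f') (g' := fun x => c' * x^n)
  · exact Eventually.of_forall hf
  · refine Eventually.of_forall fun x => ?_
    exact fixup ((hasDerivAt_pow (n+1) x).const_mul c) (by rw [hcc]; push_cast; ring)
  · filter_upwards [self_mem_nhdsWithin] with x hx
    have hx' : (0:ℝ) < x := hx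
    have : x ^ n ≠ 0 := by positivity
    exact mul_ne_zero hc' this
  · exact hf0
  · have hcont : Continuous (fun x : ℝ => c * x^(n+1)) := by fun_prop
    have := (hcont.tendsto 0).mono_left (nhdsWithin_le_nhds (s := Set.Ioi 0))
    simpa using this
  · exact hdiv


lemma h5L : Tendsto (fun x => Cf (217/4) 23 (729/4) x / (120 * x^0))
    (nhdsWithin 0 (Set.Ioi 0)) (nhds (-16/15)) := by
  have := ((Cf_cont (217/4) 23 (729/4)).tendsto 0).mono_left
    (nhdsWithin_le_nhds (s := Set.Ioi 0))
  rw [Cf_zero] at this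
  have h := this.div_const 120
  norm_num at h
  simpa [pow_zero, neg_div] using h

lemma h4L : Tendsto (fun x => Sf (141/4) 19 (243/4) x / (120 * x^1))
    (nhdsWithin 0 (Set.Ioi 0)) (nhds (-16/15)) := by
  refine step _ _ 0 120 120 _ (by norm_num) (by norm_num) (fun x => ?_) (Sf_tendsto _ _ _) h5L
  have := Sf_hasDerivAt (141/4) 19 (243/4) x
  norm_num at this ⊢
  exact this

lemma h3L : Tendsto (fun x => Cf (81/4) 15 (81/4) x / (60 * x^2))
    (nhdsWithin 0 (Set.Ioi 0)) (nhds (-16/15)) := by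
  refine step _ _ 1 60 120 _ (by norm_num) (by norm_num) (fun x => ?_) (Cf_tendsto _ _) h4L
  have := Cf_hasDerivAt (81/4) 15 (81/4) x
  norm_num at this ⊢
  exact this

lemma h2L : Tendsto (fun x => Sf (37/4) 11 (27/4) x / (20 * x^3))
    (nhdsWithin 0 (Set.Ioi 0)) (nhds (-16/15)) := by
  refine step _ _ 2 20 60 _ (by norm_num) (by norm_num) (fun x => ?_) (Sf_tendsto _ _ _) h3L
  have := Sf_hasDerivAt (37/4) 11 (27/4) x
  norm_num at this ⊢
  exact this

lemma h1L : Tendsto (fun x => Cf (9/4) 7 (9/4) x / (5 * x^4))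
    (nhdsWithin 0 (Set.Ioi 0)) (nhds (-16/15)) := by
  refine step _ _ 3 5 20 _ (by norm_num) (by norm_num) (fun x => ?_) (Cf_tendsto _ _) h2L
  have := Cf_hasDerivAt (9/4) 7 (9/4) x
  norm_num at this ⊢
  exact this

lemma h0L : Tendsto (fun x => Sf (-3/4) 3 (3/4) x / (1 * x^5))
    (nhdsWithin 0 (Set.Ioi 0)) (nhds (-16/15)) := by
  refine step _ _ 4 1 5 _ (by norm_num) (by norm_num) (fun x => ?_) (Sf_tendsto _ _ _) h1L
  have := Sf_hasDerivAt (-3/4) 3 (3/4) x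
  norm_num at this ⊢
  exact this

/-- `G` extends continuously to `0` with value `−16/15`: `G η → −16/15` as `η → 0⁺`. -/
theorem GBCS_tendsto_zero_right :
    Tendsto GBCS (nhdsWithin 0 (Set.Ioi 0)) (nhds (-16/15)) := by
  have hcosh : Tendsto (fun x : ℝ => 1 / Real.cosh x ^ 3) (nhdsWithin 0 (Set.Ioi 0)) (nhds 1) := by
    have hc : Continuous (fun x : ℝ => 1 / Real.cosh x ^ 3) := by
      apply Continuous.div continuous_const (by fun_prop)
      intro x
      exact pow_ne_zero _ (Real.cosh_pos x).ne'
    have := (hc.tendsto 0).mono_left (nhdsWithin_le_nhds (s := Set.Ioi 0))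
    simpa using this
  have key : Tendsto (fun x => Sf (-3/4) 3 (3/4) x / (1 * x^5) * (1 / Real.cosh x ^ 3))
      (nhdsWithin 0 (Set.Ioi 0)) (nhds (-16/15)) := by
    have := h0L.mul hcosh
    simpa using this
  refine key.congr' ?_
  filter_upwards [self_mem_nhdsWithin] with x hx
  have hx0 : (0:ℝ) < x := hx
  have hxne : x ≠ 0 := hx0.ne'
  have hcne : Real.cosh x ≠ 0 := (Real.cosh_pos x).ne'
  simp only [GBCS, gBCS, if_neg hxne, Sf, Real.tanh_eq_sinh_div_cosh]
  rw [Real.sinh_three_mul]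
  have hsq : Real.cosh x ^ 2 = Real.sinh x ^ 2 + 1 := Real.cosh_sq x
  field_simp
  linear_combination (12 * Real.sinh x) * hsq
end

section
/- Fix T with 0 < T ≤ T_c, and define F(T,Y) = ∫_{2k_B T_c ε}^{ℏω_D} (1/√(ξ²+Y)) tanh(√(ξ²+Y)/(2k_B T)) dξ − 1/(U₀N₀). Then the partial derivative ∂F/∂Y exists on Y > 0 and equals (1/(2(2k_B T)³)) ∫_{2k_B T_c ε}^{ℏω_D} g(√(ξ²+Y)/(2k_B T)) dξ, where g(η) = (1/η²)(1/cosh²η − tanh(η)/η). -/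
open Real intervalIntegral

lemma tanh_hasDerivAt (x : ℝ) : HasDerivAt Real.tanh (1 / (Real.cosh x)^2) x := by
  have h : HasDerivAt (fun x => Real.sinh x / Real.cosh x)
      ((Real.cosh x * Real.cosh x - Real.sinh x * Real.sinh x) / (Real.cosh x)^2) x :=
    (Real.hasDerivAt_sinh x).div (Real.hasDerivAt_cosh x) (Real.cosh_pos x).ne'
  have he : (fun x => Real.sinh x / Real.cosh x) = Real.tanh := by
    funext y; rw [Real.tanh_eq_sinh_div_cosh]
  have hv : Real.cosh x * Real.cosh x - Real.sinh x * Real.sinh x = 1 := by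
    have := Real.cosh_sq_sub_sinh_sq x; nlinarith [this]
  rw [he, hv] at h
  exact h

lemma abs_tanh_le_one (x : ℝ) : |Real.tanh x| ≤ 1 := by
  rw [Real.tanh_eq_sinh_div_cosh, abs_div, abs_of_pos (Real.cosh_pos x),
    div_le_one (Real.cosh_pos x)]
  rcases abs_cases (Real.sinh x) with ⟨h, _⟩ | ⟨h, _⟩
  · rw [h]; exact (Real.sinh_lt_cosh x).le
  · rw [h]
    have := Real.sinh_lt_cosh (-x)
    rw [Real.sinh_neg, Real.cosh_neg] at this
    linarith

lemma continuous_tanh : Continuous Real.tanh := by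
  have : Real.tanh = fun x => Real.sinh x / Real.cosh x := by
    funext y; rw [Real.tanh_eq_sinh_div_cosh]
  rw [this]
  exact Real.continuous_sinh.div Real.continuous_cosh (fun x => (Real.cosh_pos x).ne')

/-- For fixed `0 < T ≤ T_c`, the function
`Y ↦ F(T,Y) = ∫_{2k_BT_cε}^{ℏω_D} (1/√(ξ²+Y)) tanh(√(ξ²+Y)/(2k_BT)) dξ − 1/(U₀N₀)`
is differentiable at every `Y > 0` with derivative
`(1/(2(2k_BT)³)) ∫_{2k_BT_cε}^{ℏω_D} g(√(ξ²+Y))/(2k_BT)) dξ`. -/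
theorem F_hasDerivAt_Y
    (kB hbar ωD U0 N0 ε Tc T : ℝ)
    (hkB : 0 < kB) (hhbar : 0 < hbar) (hωD : 0 < ωD)
    (hU0 : 0 < U0) (hN0 : 0 < N0) (hε : 0 < ε)
    (hTc : 0 < Tc) (hT : 0 < T) (hTTc : T ≤ Tc) :
    ∀ Y : ℝ, 0 < Y →
      HasDerivAt
        (fun Y => (∫ ξ in (2*kB*Tc*ε)..(hbar*ωD),
            (1/Real.sqrt (ξ^2+Y)) * Real.tanh (Real.sqrt (ξ^2+Y)/(2*kB*T)))
          - 1/(U0*N0))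
        ((1/(2*(2*kB*T)^3)) * ∫ ξ in (2*kB*Tc*ε)..(hbar*ωD),
            gBCS (Real.sqrt (ξ^2+Y)/(2*kB*T)))
        Y := by
  intro Y₀ hY₀
  set c : ℝ := 2*kB*T with hc
  have hcpos : 0 < c := by positivity
  set a : ℝ := 2*kB*Tc*ε with ha
  set b : ℝ := hbar*ωD with hb
  -- positivity facts
  have hsq : ∀ (t x : ℝ), 0 < x → 0 < Real.sqrt (t^2 + x) := by
    intro t x hx
    apply Real.sqrt_pos.2
    positivity
  -- derivative integrand
  set F' : ℝ → ℝ → ℝ := fun x t => (1/(2*c^3)) * gBCS (Real.sqrt (t^2+x)/c) with hF'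
  -- key: pointwise differentiation
  have key : ∀ (t x : ℝ), 0 < x →
      HasDerivAt (fun y => (1/Real.sqrt (t^2+y)) * Real.tanh (Real.sqrt (t^2+y)/c))
        (F' x t) x := by
    intro t x hx
    have hs : 0 < Real.sqrt (t^2 + x) := hsq t x hx
    set s : ℝ := Real.sqrt (t^2 + x) with hsdef
    have h1 : HasDerivAt (fun y : ℝ => t^2 + y) 1 x := by
      simpa using (hasDerivAt_id x).const_add (t^2)
    have h2 : HasDerivAt (fun y => Real.sqrt (t^2 + y)) (1/(2*s)) x := by
      have := (Real.hasDerivAt_sqrt (by positivity : t^2 + x ≠ 0)).comp x h1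
      exact this.congr_deriv (by rw [hsdef, mul_one])
    have h3 : HasDerivAt (fun y => Real.tanh (Real.sqrt (t^2+y)/c))
        ((1/(Real.cosh (s/c))^2) * ((1/(2*s))/c)) x := by
      have hdc : HasDerivAt (fun y => Real.sqrt (t^2+y)/c) ((1/(2*s))/c) x := h2.div_const c
      exact (tanh_hasDerivAt (s/c)).comp x hdc
    have h4 : HasDerivAt (fun y => Real.tanh (Real.sqrt (t^2+y)/c) / Real.sqrt (t^2+y))
        (((1/(Real.cosh (s/c))^2) * ((1/(2*s))/c) * s - Real.tanh (s/c) * (1/(2*s))) / s^2) x :=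
      h3.div h2 hs.ne'
    have heq : (fun y => (1/Real.sqrt (t^2+y)) * Real.tanh (Real.sqrt (t^2+y)/c))
        = (fun y => Real.tanh (Real.sqrt (t^2+y)/c) / Real.sqrt (t^2+y)) := by
      funext y; rw [one_div, inv_mul_eq_div]
    rw [heq]
    convert h4 using 1
    have hηne : s/c ≠ 0 := by positivity
    have hcosh := (Real.cosh_pos (s/c)).ne'
    simp only [hF', gBCS, if_neg hηne]
    rw [← hsdef]
    rw [if_neg hηne]
    have hsne := hs.ne'
    have hcne := hcpos.ne'
    have hcoshne : Real.cosh (s/c) ≠ 0 := (Real.cosh_pos _).ne'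
    clear_value s
    field_simp
  -- continuity of F' in t for fixed x > 0
  have hF'cont : ∀ x : ℝ, 0 < x → Continuous (fun t => F' x t) := by
    intro x hx
    have hsc : Continuous fun t : ℝ => Real.sqrt (t^2 + x) :=
      (continuous_pow 2 |>.add continuous_const).sqrt
    have hηc : Continuous fun t : ℝ => Real.sqrt (t^2 + x) / c := hsc.div_const c
    have hηne : ∀ t : ℝ, Real.sqrt (t^2+x)/c ≠ 0 := fun t => by
      have := hsq t x hx; positivity
    have : (fun t => F' x t) = fun t =>
        (1/(2*c^3)) * ((1/(Real.sqrt (t^2+x)/c)^2) *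
          (1/(Real.cosh (Real.sqrt (t^2+x)/c))^2
            - Real.tanh (Real.sqrt (t^2+x)/c) / (Real.sqrt (t^2+x)/c))) := by
      funext t
      simp only [hF', gBCS, if_neg (hηne t)]
    rw [this]
    apply continuous_const.mul
    apply Continuous.mul
    · exact continuous_const.div (hηc.pow 2) (fun t => pow_ne_zero 2 (hηne t))
    · apply Continuous.sub
      · exact continuous_const.div ((continuous_cosh.comp hηc).pow 2)
          (fun t => pow_ne_zero 2 (Real.cosh_pos _).ne')
      · exact (continuous_tanh.comp hηc).div hηc hηne
  -- continuity of F x in t for fixed x > 0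
  have hFcont : ∀ x : ℝ, 0 < x → Continuous (fun t =>
      (1/Real.sqrt (t^2+x)) * Real.tanh (Real.sqrt (t^2+x)/c)) := by
    intro x hx
    have hsc : Continuous fun t : ℝ => Real.sqrt (t^2 + x) :=
      (continuous_pow 2 |>.add continuous_const).sqrt
    exact (continuous_const.div hsc (fun t => (hsq t x hx).ne')).mul
      (continuous_tanh.comp (hsc.div_const c))
  -- the bound
  set η₀ : ℝ := Real.sqrt (Y₀/2) / c with hη₀
  have hη₀pos : 0 < η₀ := by
    have : (0:ℝ) < Real.sqrt (Y₀/2) := Real.sqrt_pos.2 (by linarith)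
    positivity
  set C : ℝ := (1/(2*c^3)) * ((1/η₀^2) * (1 + 1/η₀)) with hC
  have hbound : ∀ t : ℝ, ∀ x ∈ Metric.ball Y₀ (Y₀/2), ‖F' x t‖ ≤ C := by
    intro t x hxball
    have hx : Y₀/2 < x := by
      rw [Metric.mem_ball, Real.dist_eq, abs_lt] at hxball
      linarith [hxball.1]
    have hxpos : 0 < x := by linarith
    have hs : 0 < Real.sqrt (t^2+x) := hsq t x hxpos
    set η : ℝ := Real.sqrt (t^2+x)/c with hηdef
    have hηpos : 0 < η := by positivity
    have hηge : η₀ ≤ η := by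
      rw [hη₀, hηdef]
      gcongr
      nlinarith
    have hηne : η ≠ 0 := hηpos.ne'
    have hgb : |gBCS η| ≤ (1/η₀^2) * (1 + 1/η₀) := by
      rw [gBCS, if_neg hηne, abs_mul]
      have h1 : |1/η^2| ≤ 1/η₀^2 := by
        rw [abs_of_pos (by positivity)]
        gcongr
      have h2 : |1/(Real.cosh η)^2 - Real.tanh η / η| ≤ 1 + 1/η₀ := by
        refine (abs_sub _ _).trans ?_
        gcongr
        · rw [abs_of_pos (by positivity : (0:ℝ) < 1/(Real.cosh η)^2)]
          rw [div_le_one (by positivity)]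
          have := Real.one_le_cosh η
          nlinarith
        · rw [abs_div, abs_of_pos hηpos]
          have e1 : |Real.tanh η| / η ≤ 1 / η := by
            gcongr
            exact abs_tanh_le_one η
          have e2 : 1 / η ≤ 1 / η₀ := by gcongr
          exact e1.trans e2
      exact mul_le_mul h1 h2 (abs_nonneg _) (by positivity)
    have hnorm : ‖F' x t‖ = (1/(2*c^3)) * |gBCS η| := by
      rw [hF']
      simp only [Real.norm_eq_abs, abs_mul]
      congr 1
      rw [abs_of_pos (by positivity : (0:ℝ) < 1/(2*c^3))]
    rw [hnorm, hC]
    exact mul_le_mul_of_nonneg_left hgb (by positivity)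
  -- apply the dominated-derivative theorem
  have main := intervalIntegral.hasDerivAt_integral_of_dominated_loc_of_deriv_le
    (F := fun x t => (1/Real.sqrt (t^2+x)) * Real.tanh (Real.sqrt (t^2+x)/c))
    (F' := F') (x₀ := Y₀) (a := a) (b := b) (bound := fun _ => C)
    (μ := MeasureTheory.volume)
    (Metric.ball_mem_nhds Y₀ (by linarith : (0:ℝ) < Y₀/2))
    ?_ ?_ ?_ ?_ ?_ ?_
  · have hD := main.2
    have hres : (∫ t in a..b, F' Y₀ t) =
        (1/(2*c^3)) * ∫ t in a..b, gBCS (Real.sqrt (t^2+Y₀)/c) := by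
      rw [← intervalIntegral.integral_const_mul]
    rw [hres] at hD
    exact hD.sub_const _
  · filter_upwards [eventually_gt_nhds hY₀] with x hx
    exact ((hFcont x hx)).aestronglyMeasurable.restrict
  · exact (hFcont Y₀ hY₀).intervalIntegrable a b
  · exact (hF'cont Y₀ hY₀).aestronglyMeasurable.restrict
  · exact Filter.Eventually.of_forall (fun t _ x hx => hbound t x hx)
  · exact intervalIntegrable_const
  · exact Filter.Eventually.of_forall (fun t _ x hx => by
      have hx' : 0 < x := by
        rw [Metric.mem_ball, Real.dist_eq, abs_lt] at hx
        linarith [hx.1]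
      exact key t x hx')
end

section
/- Let Δ = √((ℏω_D − 2k_B T_c ε e^{1/(U₀N₀)})(ℏω_D − 2k_B T_c ε e^{−1/(U₀N₀)})) / sinh(1/(U₀N₀)), assuming ε small enough that ℏω_D > 2k_B T_c ε e^{1/(U₀N₀)}. Then ∫_{2k_B T_c ε}^{ℏω_D} dξ/√(ξ² + Δ²) = 1/(U₀N₀); i.e., F(0, Δ²) = 0 where F(0,Y) = ∫_{2k_B T_c ε}^{ℏω_D} dξ/√(ξ²+Y) − 1/(U₀N₀). -/
open Real intervalIntegral

lemma integral_one_div_sqrt_sq_add_sq (a b c : ℝ) (hc : 0 < c) :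
    ∫ ξ in a..b, 1/Real.sqrt (ξ^2 + c^2)
      = Real.arsinh (b/c) - Real.arsinh (a/c) := by
  have hpos : ∀ x : ℝ, 0 < Real.sqrt (x^2 + c^2) := fun x =>
    Real.sqrt_pos.2 (by positivity)
  have hderiv : ∀ x ∈ Set.uIcc a b,
      HasDerivAt (fun ξ => Real.arsinh (ξ/c)) (1/Real.sqrt (x^2 + c^2)) x := by
    intro x _
    have h1 : HasDerivAt (fun ξ : ℝ => ξ/c) (1/c) x := by
      simpa using (hasDerivAt_id x).div_const c
    have h2 := (Real.hasDerivAt_arsinh (x/c)).comp x h1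
    refine h2.congr_deriv ?_
    have hxc : 1 + (x/c)^2 = (x^2 + c^2)/c^2 := by field_simp; ring
    have hsq : Real.sqrt (1 + (x/c)^2) = Real.sqrt (x^2 + c^2)/c := by
      rw [hxc, Real.sqrt_div (by positivity), Real.sqrt_sq hc.le]
    rw [hsq]
    field_simp
  have hcont : Continuous fun x : ℝ => 1/Real.sqrt (x^2 + c^2) := by
    apply continuous_const.div
    · exact Real.continuous_sqrt.comp (by continuity)
    · exact fun x => (hpos x).ne'
  rw [intervalIntegral.integral_eq_sub_of_hasDerivAt hderiv (hcont.intervalIntegrable a b)]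

/-- With `Δ = √((ℏω_D − 2k_BT_cε e^{1/(U₀N₀)})(ℏω_D − 2k_BT_cε e^{−1/(U₀N₀)}))/sinh(1/(U₀N₀))`,
one has `F(0,Δ²) = 0`, i.e. `∫_{2k_BT_cε}^{ℏω_D} dξ/√(ξ²+Δ²) = 1/(U₀N₀)`. -/
theorem F_zero_at_Delta_sq
    (kB hbar ωD U0 N0 ε Tc : ℝ)
    (hkB : 0 < kB) (hhbar : 0 < hbar) (hωD : 0 < ωD)
    (hU0 : 0 < U0) (hN0 : 0 < N0) (hε : 0 < ε) (hTc : 0 < Tc)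
    (hsmall : 2*kB*Tc*ε * Real.exp (1/(U0*N0)) < hbar*ωD) :
    (∫ ξ in (2*kB*Tc*ε)..(hbar*ωD),
        1/Real.sqrt (ξ^2 +
          (Real.sqrt ((hbar*ωD - 2*kB*Tc*ε * Real.exp (1/(U0*N0))) *
              (hbar*ωD - 2*kB*Tc*ε * Real.exp (-(1/(U0*N0))))) /
            Real.sinh (1/(U0*N0)))^2))
      = 1/(U0*N0) := by
  set t := 1/(U0*N0) with ht_def
  set a := 2*kB*Tc*ε with ha_def
  set b := hbar*ωD with hb_def
  have ht : 0 < t := by positivity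
  have ha : 0 < a := by positivity
  have hs : 0 < Real.sinh t := Real.sinh_pos_iff.2 ht
  have he1 : a * Real.exp t < b := hsmall
  have he2 : a * Real.exp (-t) < b :=
    lt_trans (by
      have := Real.exp_lt_exp.2 (show -t < t by linarith)
      nlinarith) he1
  have hP : 0 < (b - a * Real.exp t) * (b - a * Real.exp (-t)) := by
    apply mul_pos <;> linarith
  set Δ := Real.sqrt ((b - a * Real.exp t) * (b - a * Real.exp (-t))) / Real.sinh t with hΔ_def
  have hΔ : 0 < Δ := div_pos (Real.sqrt_pos.2 hP) hs
  rw [integral_one_div_sqrt_sq_add_sq _ _ _ hΔ]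
  -- algebra
  have hcosh : Real.cosh t < Real.exp t := by
    have := Real.exp_lt_exp.2 (show -t < t by linarith)
    rw [Real.cosh_eq]; linarith
  have hbc : a * Real.cosh t < b := by nlinarith [Real.cosh_pos (x := t)]
  have hΔsq : Δ^2 = (b - a * Real.exp t) * (b - a * Real.exp (-t)) / (Real.sinh t)^2 := by
    rw [hΔ_def, div_pow, Real.sq_sqrt hP.le]
  have hes : Real.exp t * Real.exp (-t) = 1 := by
    rw [← Real.exp_add]; simp
  have hec : Real.exp t + Real.exp (-t) = 2 * Real.cosh t := by
    rw [Real.cosh_eq]; ring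
  have hc2 : Real.cosh t ^ 2 = Real.sinh t ^ 2 + 1 := Real.cosh_sq t
  have hnum : (b - a * Real.exp t) * (b - a * Real.exp (-t)) + a^2 * Real.sinh t^2
      = (b - a * Real.cosh t)^2 := by
    linear_combination (-(a*b)) * hec + a^2 * hes - a^2 * hc2
  have hkey : Δ^2 + a^2 = ((b - a * Real.cosh t)/Real.sinh t)^2 := by
    rw [hΔsq, div_pow, ← hnum]
    field_simp
  have hsq2 : Real.sqrt (Δ^2 + a^2) = (b - a * Real.cosh t)/Real.sinh t := by
    rw [hkey, Real.sqrt_sq (div_nonneg (by linarith) hs.le)]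
  have key : b/Δ = Real.sinh (t + Real.arsinh (a/Δ)) := by
    rw [Real.sinh_add, Real.sinh_arsinh, Real.cosh_arsinh]
    have h1 : 1 + (a/Δ)^2 = (Δ^2 + a^2)/Δ^2 := by field_simp
    have h2 : Real.sqrt (1 + (a/Δ)^2) = (b - a * Real.cosh t)/Real.sinh t / Δ := by
      rw [h1, Real.sqrt_div (by positivity), Real.sqrt_sq hΔ.le, hsq2]
    rw [h2]
    field_simp
    ring
  rw [key, Real.arsinh_sinh]
  ring
end
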